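/- arXiv:2408.14304 — 3 statements merged into one kernel-verified Lean document; each statement's English description precedes it below -/
import Mathlib

section
/- Birkhoff decomposition: let H be a graded connected Hopf algebra, A a commutative algebra, and K : A → A a linear operator satisfying the Rota-Baxter identity K(a)K(b) = K(K(a)b + aK(b) − ab). For any character g : H → A there exist unique maps g₋ and g₊ with g₋(x) = −K((g₋ ⋆ g∘(id − u∘ē))(x)) and g₊(x) = (id_A − K)((g₋ ⋆ g∘(id − u∘ē))(x)) for x in the augmentation ideal, g₋(1)=g₊(1)=1, such that g = g₋^{⋆−1} ⋆ g₊. -/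
open TensorProduct

/-- Convolution product of linear maps from a coalgebra to an algebra. -/
noncomputable def conv {K C A : Type*} [CommRing K] [AddCommGroup C] [Module K C]
    [Coalgebra K C] [Ring A] [Algebra K A] (f g : C →ₗ[K] A) : C →ₗ[K] A :=
  LinearMap.mul' K A ∘ₗ TensorProduct.map f g ∘ₗ Coalgebra.comul

section Aux

variable {K H A : Type*} [Field K] [Ring H] [HopfAlgebra K H] [CommRing A] [Algebra K A]

lemma conv_apply (f h : H →ₗ[K] A) (x : H) :
    conv f h x = LinearMap.mul' K A
      (TensorProduct.map f h (Coalgebra.comul (R := K) x)) := rfl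

lemma conv_sub_left (f h ψ : H →ₗ[K] A) : conv (f - h) ψ = conv f ψ - conv h ψ := by
  apply LinearMap.ext; intro x
  rw [LinearMap.sub_apply, conv_apply, conv_apply, conv_apply]
  generalize (Coalgebra.comul (R := K) x) = t
  induction t using TensorProduct.induction_on with
  | zero => simp
  | tmul a b => simp [TensorProduct.map_tmul, TensorProduct.sub_tmul, sub_mul]
  | add a b ha hb => simp only [map_add, ha, hb]; ring

lemma conv_add_left (f h ψ : H →ₗ[K] A) : conv (f + h) ψ = conv f ψ + conv h ψ := by
  apply LinearMap.ext; intro x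
  rw [LinearMap.add_apply, conv_apply, conv_apply, conv_apply]
  generalize (Coalgebra.comul (R := K) x) = t
  induction t using TensorProduct.induction_on with
  | zero => simp
  | tmul a b => simp [TensorProduct.map_tmul, TensorProduct.add_tmul, add_mul]
  | add a b ha hb => simp only [map_add, ha, hb]; ring

lemma conv_sub_right (f h ψ : H →ₗ[K] A) : conv ψ (f - h) = conv ψ f - conv ψ h := by
  apply LinearMap.ext; intro x
  rw [LinearMap.sub_apply, conv_apply, conv_apply, conv_apply]
  generalize (Coalgebra.comul (R := K) x) = t
  induction t using TensorProduct.induction_on with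
  | zero => simp
  | tmul a b => simp [TensorProduct.map_tmul, TensorProduct.tmul_sub, mul_sub]
  | add a b ha hb => simp only [map_add, ha, hb]; ring

lemma conv_add_right (f h ψ : H →ₗ[K] A) : conv ψ (f + h) = conv ψ f + conv ψ h := by
  apply LinearMap.ext; intro x
  rw [LinearMap.add_apply, conv_apply, conv_apply, conv_apply]
  generalize (Coalgebra.comul (R := K) x) = t
  induction t using TensorProduct.induction_on with
  | zero => simp
  | tmul a b => simp [TensorProduct.map_tmul, TensorProduct.tmul_add, mul_add]
  | add a b ha hb => simp only [map_add, ha, hb]; ring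

lemma conv_unit_left (f : H →ₗ[K] A) :
    conv ((Algebra.linearMap K A) ∘ₗ Coalgebra.counit) f = f := by
  apply LinearMap.ext; intro x
  have h0 : TensorProduct.map ((Algebra.linearMap K A) ∘ₗ Coalgebra.counit) f
      = TensorProduct.map (Algebra.linearMap K A) f ∘ₗ
        LinearMap.rTensor H (Coalgebra.counit (R := K) (A := H)) := by
    apply TensorProduct.ext'; intro a b
    simp
  rw [conv_apply, h0, LinearMap.comp_apply, Coalgebra.rTensor_counit_comul]
  simp

lemma conv_unit_right (f : H →ₗ[K] A) :
    conv f ((Algebra.linearMap K A) ∘ₗ Coalgebra.counit) = f := by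
  apply LinearMap.ext; intro x
  have h0 : TensorProduct.map f ((Algebra.linearMap K A) ∘ₗ Coalgebra.counit)
      = TensorProduct.map f (Algebra.linearMap K A) ∘ₗ
        LinearMap.lTensor H (Coalgebra.counit (R := K) (A := H)) := by
    apply TensorProduct.ext'; intro a b
    simp
  rw [conv_apply, h0, LinearMap.comp_apply, Coalgebra.lTensor_counit_comul]
  simp

lemma conv_assoc (a b c : H →ₗ[K] A) : conv (conv a b) c = conv a (conv b c) := by
  apply LinearMap.ext; intro x
  have hL : TensorProduct.map (conv a b) c
      = (LinearMap.rTensor A (LinearMap.mul' K A)) ∘ₗ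
        TensorProduct.map (TensorProduct.map a b) c ∘ₗ
        (LinearMap.rTensor H (Coalgebra.comul (R := K))) := by
    rw [LinearMap.rTensor, LinearMap.rTensor, ← TensorProduct.map_comp,
      ← TensorProduct.map_comp]
    rfl
  have hR : TensorProduct.map a (conv b c)
      = (LinearMap.lTensor A (LinearMap.mul' K A)) ∘ₗ
        TensorProduct.map a (TensorProduct.map b c) ∘ₗ
        (LinearMap.lTensor H (Coalgebra.comul (R := K))) := by
    rw [LinearMap.lTensor, LinearMap.lTensor, ← TensorProduct.map_comp,
      ← TensorProduct.map_comp]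
    rfl
  have hmul : (LinearMap.mul' K A) ∘ₗ LinearMap.rTensor A (LinearMap.mul' K A)
      = ((LinearMap.mul' K A) ∘ₗ LinearMap.lTensor A (LinearMap.mul' K A)) ∘ₗ
        (TensorProduct.assoc K A A A).toLinearMap := by
    apply TensorProduct.ext_threefold; intro x y z
    simp [mul_assoc]
  have hnat : (TensorProduct.assoc K A A A).toLinearMap ∘ₗ
        TensorProduct.map (TensorProduct.map a b) c
      = TensorProduct.map a (TensorProduct.map b c) ∘ₗ
        (TensorProduct.assoc K H H H).toLinearMap := by
    apply TensorProduct.ext_threefold; intro x y z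
    simp
  have hco := Coalgebra.coassoc_apply (R := K) (A := H) x
  rw [conv_apply, conv_apply, hL, hR]
  simp only [LinearMap.comp_apply]
  rw [← LinearMap.comp_apply (LinearMap.mul' K A), hmul]
  simp only [LinearMap.comp_apply, LinearEquiv.coe_coe]
  have hnat' : (TensorProduct.assoc K A A A) ((TensorProduct.map (TensorProduct.map a b) c)
        ((LinearMap.rTensor H (Coalgebra.comul (R := K))) (Coalgebra.comul x)))
      = (TensorProduct.map a (TensorProduct.map b c)) ((TensorProduct.assoc K H H H)
        ((LinearMap.rTensor H (Coalgebra.comul (R := K))) (Coalgebra.comul x))) := by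
    have h3 := LinearMap.congr_fun hnat
      ((LinearMap.rTensor H (Coalgebra.comul (R := K))) (Coalgebra.comul x))
    simpa using h3
  rw [hnat', hco]

lemma conv_one (f h : H →ₗ[K] A) : conv f h 1 = f 1 * h 1 := by
  rw [conv_apply]
  rw [show Coalgebra.comul (R := K) (1 : H) = (1 : H) ⊗ₜ[K] (1 : H) by
    rw [Bialgebra.comul_one]; rfl]
  simp

/-- vanishing of convolutions against graded pieces, left version -/
lemma conv_zero_left_core
    (ℬ : ℕ → Submodule K H)
    (hconn : ℬ 0 = (1 : Submodule K H))
    (hred : ∀ n, 1 ≤ n → ∀ x ∈ ℬ n,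
      Coalgebra.comul (R := K) x - x ⊗ₜ[K] (1 : H) - (1 : H) ⊗ₜ[K] x ∈
        ⨆ (p : ℕ) (q : ℕ) (_ : p + q = n ∧ p ≠ 0 ∧ q ≠ 0),
          LinearMap.range (TensorProduct.map (ℬ p).subtype (ℬ q).subtype))
    (d ψ : H →ₗ[K] A) (hψ1 : ψ 1 = 0) (n : ℕ)
    (hd : ∀ m, m < n → ∀ y ∈ ℬ m, d y = 0) :
    ∀ x ∈ ℬ n, conv d ψ x = 0 := by
  intro x hx
  rcases Nat.eq_zero_or_pos n with h0 | hpos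
  · subst h0
    rw [hconn] at hx
    obtain ⟨c, rfl⟩ := Submodule.mem_one.mp hx
    have hcm : Coalgebra.comul (R := K) (algebraMap K H c)
        = c • ((1 : H) ⊗ₜ[K] (1 : H)) := by
      rw [Algebra.algebraMap_eq_smul_one, map_smul, Bialgebra.comul_one]
      rw [show ((1 : H ⊗[K] H)) = (1 : H) ⊗ₜ[K] (1 : H) from rfl]
    rw [conv_apply, hcm]
    simp [hψ1]
  · have hr := hred n hpos x hx
    have hcm : Coalgebra.comul (R := K) x
        = (Coalgebra.comul (R := K) x - x ⊗ₜ[K] (1 : H) - (1 : H) ⊗ₜ[K] x)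
          + x ⊗ₜ[K] (1 : H) + (1 : H) ⊗ₜ[K] x := by abel
    have hker : (⨆ (p : ℕ) (q : ℕ) (_ : p + q = n ∧ p ≠ 0 ∧ q ≠ 0),
          LinearMap.range (TensorProduct.map (ℬ p).subtype (ℬ q).subtype)) ≤
        LinearMap.ker ((LinearMap.mul' K A) ∘ₗ TensorProduct.map d ψ) := by
      refine iSup_le fun p => iSup_le fun q => iSup_le fun hpq => ?_
      rw [LinearMap.range_le_ker_iff, LinearMap.comp_assoc, ← TensorProduct.map_comp]
      have hz : d ∘ₗ (ℬ p).subtype = 0 :=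
        LinearMap.ext fun y => hd p (by omega) y y.2
      rw [hz]
      apply TensorProduct.ext'
      intro a b
      simp
    have h0 : ((LinearMap.mul' K A) ∘ₗ TensorProduct.map d ψ)
        (Coalgebra.comul (R := K) x - x ⊗ₜ[K] (1 : H) - (1 : H) ⊗ₜ[K] x) = 0 :=
      hker hr
    have hd1 : d 1 = 0 :=
      hd 0 hpos 1 (by rw [hconn]; exact Submodule.mem_one.mpr ⟨1, map_one _⟩)
    rw [conv_apply, hcm]
    simp only [map_add, LinearMap.comp_apply] at h0 ⊢
    rw [h0]
    simp [hψ1, hd1]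

/-- vanishing of convolutions against graded pieces, right version -/
lemma conv_zero_right_core
    (ℬ : ℕ → Submodule K H)
    (hconn : ℬ 0 = (1 : Submodule K H))
    (hred : ∀ n, 1 ≤ n → ∀ x ∈ ℬ n,
      Coalgebra.comul (R := K) x - x ⊗ₜ[K] (1 : H) - (1 : H) ⊗ₜ[K] x ∈
        ⨆ (p : ℕ) (q : ℕ) (_ : p + q = n ∧ p ≠ 0 ∧ q ≠ 0),
          LinearMap.range (TensorProduct.map (ℬ p).subtype (ℬ q).subtype))
    (d ψ : H →ₗ[K] A) (hψ1 : ψ 1 = 0) (n : ℕ)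
    (hd : ∀ m, m < n → ∀ y ∈ ℬ m, d y = 0) :
    ∀ x ∈ ℬ n, conv ψ d x = 0 := by
  intro x hx
  rcases Nat.eq_zero_or_pos n with h0 | hpos
  · subst h0
    rw [hconn] at hx
    obtain ⟨c, rfl⟩ := Submodule.mem_one.mp hx
    have hcm : Coalgebra.comul (R := K) (algebraMap K H c)
        = c • ((1 : H) ⊗ₜ[K] (1 : H)) := by
      rw [Algebra.algebraMap_eq_smul_one, map_smul, Bialgebra.comul_one]
      rw [show ((1 : H ⊗[K] H)) = (1 : H) ⊗ₜ[K] (1 : H) from rfl]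
    rw [conv_apply, hcm]
    simp [hψ1]
  · have hr := hred n hpos x hx
    have hcm : Coalgebra.comul (R := K) x
        = (Coalgebra.comul (R := K) x - x ⊗ₜ[K] (1 : H) - (1 : H) ⊗ₜ[K] x)
          + x ⊗ₜ[K] (1 : H) + (1 : H) ⊗ₜ[K] x := by abel
    have hker : (⨆ (p : ℕ) (q : ℕ) (_ : p + q = n ∧ p ≠ 0 ∧ q ≠ 0),
          LinearMap.range (TensorProduct.map (ℬ p).subtype (ℬ q).subtype)) ≤
        LinearMap.ker ((LinearMap.mul' K A) ∘ₗ TensorProduct.map ψ d) := by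
      refine iSup_le fun p => iSup_le fun q => iSup_le fun hpq => ?_
      rw [LinearMap.range_le_ker_iff, LinearMap.comp_assoc, ← TensorProduct.map_comp]
      have hz : d ∘ₗ (ℬ q).subtype = 0 :=
        LinearMap.ext fun y => hd q (by omega) y y.2
      rw [hz]
      apply TensorProduct.ext'
      intro a b
      simp
    have h0 : ((LinearMap.mul' K A) ∘ₗ TensorProduct.map ψ d)
        (Coalgebra.comul (R := K) x - x ⊗ₜ[K] (1 : H) - (1 : H) ⊗ₜ[K] x) = 0 :=
      hker hr
    have hd1 : d 1 = 0 :=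
      hd 0 hpos 1 (by rw [hconn]; exact Submodule.mem_one.mpr ⟨1, map_one _⟩)
    rw [conv_apply, hcm]
    simp only [map_add, LinearMap.comp_apply] at h0 ⊢
    rw [h0]
    simp [hψ1, hd1]

lemma conv_eq_on_left
    (ℬ : ℕ → Submodule K H)
    (hconn : ℬ 0 = (1 : Submodule K H))
    (hred : ∀ n, 1 ≤ n → ∀ x ∈ ℬ n,
      Coalgebra.comul (R := K) x - x ⊗ₜ[K] (1 : H) - (1 : H) ⊗ₜ[K] x ∈
        ⨆ (p : ℕ) (q : ℕ) (_ : p + q = n ∧ p ≠ 0 ∧ q ≠ 0),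
          LinearMap.range (TensorProduct.map (ℬ p).subtype (ℬ q).subtype))
    (ψ : H →ₗ[K] A) (hψ1 : ψ 1 = 0) (f h : H →ₗ[K] A) (n : ℕ)
    (hfh : ∀ m, m < n → ∀ y ∈ ℬ m, f y = h y) :
    ∀ x ∈ ℬ n, conv f ψ x = conv h ψ x := by
  intro x hx
  have hz := conv_zero_left_core ℬ hconn hred (f - h) ψ hψ1 n
    (fun m hm y hy => by simp [hfh m hm y hy]) x hx
  rw [conv_sub_left] at hz
  exact sub_eq_zero.mp hz

lemma conv_eq_on_right
    (ℬ : ℕ → Submodule K H)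
    (hconn : ℬ 0 = (1 : Submodule K H))
    (hred : ∀ n, 1 ≤ n → ∀ x ∈ ℬ n,
      Coalgebra.comul (R := K) x - x ⊗ₜ[K] (1 : H) - (1 : H) ⊗ₜ[K] x ∈
        ⨆ (p : ℕ) (q : ℕ) (_ : p + q = n ∧ p ≠ 0 ∧ q ≠ 0),
          LinearMap.range (TensorProduct.map (ℬ p).subtype (ℬ q).subtype))
    (ψ : H →ₗ[K] A) (hψ1 : ψ 1 = 0) (f h : H →ₗ[K] A) (n : ℕ)
    (hfh : ∀ m, m < n → ∀ y ∈ ℬ m, f y = h y) :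
    ∀ x ∈ ℬ n, conv ψ f x = conv ψ h x := by
  intro x hx
  have hz := conv_zero_right_core ℬ hconn hred (f - h) ψ hψ1 n
    (fun m hm y hy => by simp [hfh m hm y hy]) x hx
  rw [conv_sub_right] at hz
  exact sub_eq_zero.mp hz

lemma ext_of_graded
    (ℬ : ℕ → Submodule K H) (hsup : (⨆ i, ℬ i) = ⊤)
    (f h : H →ₗ[K] A) (hfh : ∀ m, ∀ x ∈ ℬ m, f x = h x) : f = h := by
  apply LinearMap.ext; intro x
  have hx : x ∈ ⨆ i, ℬ i := hsup ▸ Submodule.mem_top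
  exact Submodule.iSup_induction ℬ (motive := fun y => f y = h y) hx
    (fun i y hy => hfh i y hy) (by simp)
    (fun a b ha hb => show f (a + b) = h (a + b) by
      rw [map_add, map_add, show f a = h a from ha, show f b = h b from hb])

/-- Abstract fixed point lemma for degree-lowering operators on a graded module. -/
lemma fixpoint_aux
    (ℬ : ℕ → Submodule K H) (hinternal : DirectSum.IsInternal ℬ)
    (e : H →ₗ[K] A) (T : (H →ₗ[K] A) → (H →ₗ[K] A))
    (hT : ∀ f h : H →ₗ[K] A, ∀ n : ℕ,
      (∀ m, m < n → ∀ y ∈ ℬ m, f y = h y) → ∀ x ∈ ℬ n, T f x = T h x) :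
    ∃! f : H →ₗ[K] A, f = e + T f := by
  classical
  have hsup : (⨆ i, ℬ i) = ⊤ := hinternal.submodule_iSup_eq_top
  set seq : ℕ → (H →ₗ[K] A) := fun n => Nat.rec e (fun _ ih => e + T ih) n with hseq
  have hseqsucc : ∀ n, seq (n + 1) = e + T (seq n) := fun n => rfl
  have hstab : ∀ m, ∀ n, m < n → ∀ x ∈ ℬ m, seq n x = seq (m + 1) x := by
    intro m
    induction m using Nat.strong_induction_on with
    | _ m IH =>
      intro n hn x hx
      obtain ⟨n', rfl⟩ : ∃ n', n = n' + 1 := ⟨n - 1, by omega⟩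
      rw [hseqsucc, hseqsucc, LinearMap.add_apply, LinearMap.add_apply]
      congr 1
      refine hT (seq n') (seq m) m (fun j hj y hy => ?_) x hx
      rw [IH j hj n' (by omega) y hy, IH j hj m (by omega) y hy]
  let equiv := LinearEquiv.ofBijective (DirectSum.coeLinearMap ℬ) hinternal
  let F : H →ₗ[K] A :=
    (DirectSum.toModule K ℕ A (fun m => (seq (m + 1)) ∘ₗ (ℬ m).subtype)) ∘ₗ
      equiv.symm.toLinearMap
  have hFcomp : ∀ m, ∀ x ∈ ℬ m, F x = seq (m + 1) x := by
    intro m x hx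
    have h1 : equiv (DirectSum.lof K ℕ (fun i => ℬ i) m ⟨x, hx⟩) = x := by
      show DirectSum.coeLinearMap ℬ _ = x
      rw [DirectSum.lof_eq_of, DirectSum.coeLinearMap_of]
    have h2 : equiv.symm x = DirectSum.lof K ℕ (fun i => ℬ i) m ⟨x, hx⟩ := by
      rw [LinearEquiv.symm_apply_eq]; exact h1.symm
    show (DirectSum.toModule K ℕ A (fun m => (seq (m + 1)) ∘ₗ (ℬ m).subtype))
      (equiv.symm x) = _
    rw [h2, DirectSum.toModule_lof]
    rfl
  have hFfix : F = e + T F := by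
    refine ext_of_graded ℬ hsup _ _ fun m x hx => ?_
    rw [hFcomp m x hx, hseqsucc, LinearMap.add_apply, LinearMap.add_apply]
    congr 1
    refine (hT F (seq m) m (fun j hj y hy => ?_) x hx).symm
    rw [hFcomp j y hy, hstab j m hj y hy]
  refine ⟨F, hFfix, ?_⟩
  intro f hf
  refine ext_of_graded ℬ hsup f F ?_
  intro m
  induction m using Nat.strong_induction_on with
  | _ m IH =>
    intro x hx
    have h1 := LinearMap.congr_fun hf x
    have h2 := LinearMap.congr_fun hFfix x
    rw [LinearMap.add_apply] at h1 h2
    rw [h1, h2]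
    congr 1
    exact hT f F m (fun j hj y hy => IH j hj y hy) x hx

end Aux

/-- **Birkhoff decomposition.** Let `H` be a graded connected Hopf algebra over a field `K`,
`A` a commutative algebra, and `P : A → A` a linear operator satisfying the Rota–Baxter identity
`P(a)P(b) = P(P(a)b + aP(b) − ab)`. For any character `g : H → A` there is a unique pair
`(g₋, g₊)` with `g₋(1) = g₊(1) = 1`,
`g₋(x) = −P((g₋ ⋆ g∘(id − u∘ē))(x))` and `g₊(x) = (id_A − P)((g₋ ⋆ g∘(id − u∘ē))(x))`
on the augmentation ideal, such that `g = g₋^{⋆−1} ⋆ g₊` (where `g₋^{⋆−1}` is the convolution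
inverse of `g₋`). -/
theorem stmt_8 {K H A : Type*} [Field K] [Ring H] [HopfAlgebra K H]
    [CommRing A] [Algebra K A]
    (ℬ : ℕ → Submodule K H)
    (hinternal : DirectSum.IsInternal ℬ)
    (hconn : ℬ 0 = (1 : Submodule K H))
    (hcounit : ∀ n, n ≠ 0 → ∀ x ∈ ℬ n, Coalgebra.counit (R := K) x = 0)
    (hred : ∀ n, 1 ≤ n → ∀ x ∈ ℬ n,
      Coalgebra.comul (R := K) x - x ⊗ₜ[K] (1 : H) - (1 : H) ⊗ₜ[K] x ∈
        ⨆ (p : ℕ) (q : ℕ) (_ : p + q = n ∧ p ≠ 0 ∧ q ≠ 0),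
          LinearMap.range (TensorProduct.map (ℬ p).subtype (ℬ q).subtype))
    (g : H →ₐ[K] A) (P : A →ₗ[K] A)
    (hP : ∀ a b, P a * P b = P (P a * b + a * P b - a * b)) :
    ∃! p : (H →ₗ[K] A) × (H →ₗ[K] A),
      p.1 1 = 1 ∧ p.2 1 = 1 ∧
      (∀ x, Coalgebra.counit (R := K) x = 0 →
        p.1 x = - P ((conv p.1 (g.toLinearMap ∘ₗ
          (LinearMap.id - (Algebra.linearMap K H) ∘ₗ Coalgebra.counit))) x)) ∧
      (∀ x, Coalgebra.counit (R := K) x = 0 →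
        p.2 x = (conv p.1 (g.toLinearMap ∘ₗ
            (LinearMap.id - (Algebra.linearMap K H) ∘ₗ Coalgebra.counit))) x
          - P ((conv p.1 (g.toLinearMap ∘ₗ
            (LinearMap.id - (Algebra.linearMap K H) ∘ₗ Coalgebra.counit))) x)) ∧
      (∃ ginv : H →ₗ[K] A,
        conv ginv p.1 = (Algebra.linearMap K A) ∘ₗ Coalgebra.counit ∧
        conv p.1 ginv = (Algebra.linearMap K A) ∘ₗ Coalgebra.counit ∧
        g.toLinearMap = conv ginv p.2) := by
  classical
  have hsup : (⨆ i, ℬ i) = ⊤ := hinternal.submodule_iSup_eq_top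
  set e : H →ₗ[K] A := (Algebra.linearMap K A) ∘ₗ Coalgebra.counit with he
  set Φ : H →ₗ[K] A := g.toLinearMap ∘ₗ
    (LinearMap.id - (Algebra.linearMap K H) ∘ₗ Coalgebra.counit) with hΦ
  have hΦeq : Φ = g.toLinearMap - e := by
    apply LinearMap.ext; intro x
    simp [hΦ, he, LinearMap.sub_apply, map_sub, AlgHom.commutes]
  have he1 : e 1 = 1 := by simp [he]
  have hΦ1 : Φ 1 = 0 := by
    rw [hΦeq]; simp [he1]
  -- the map g₋, obtained as fixed point
  set T₁ : (H →ₗ[K] A) → (H →ₗ[K] A) := fun f => -(P ∘ₗ conv f Φ) with hT₁def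
  have hT₁ : ∀ f h : H →ₗ[K] A, ∀ n : ℕ,
      (∀ m, m < n → ∀ y ∈ ℬ m, f y = h y) → ∀ x ∈ ℬ n, T₁ f x = T₁ h x := by
    intro f h n hfh x hx
    have := conv_eq_on_left ℬ hconn hred Φ hΦ1 f h n hfh x hx
    simp [hT₁def, this]
  obtain ⟨F, hFfix, hFuniq⟩ := fixpoint_aux ℬ hinternal e T₁ hT₁
  have hF1 : F 1 = 1 := by
    have h1 := LinearMap.congr_fun hFfix 1
    rw [LinearMap.add_apply] at h1
    have h2 : conv F Φ 1 = 0 := by rw [conv_one, hΦ1, mul_zero]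
    simp [hT₁def, h2, he1] at h1
    simpa using h1
  have hFrec : ∀ x, Coalgebra.counit (R := K) x = 0 → F x = -P (conv F Φ x) := by
    intro x hx
    have h1 := LinearMap.congr_fun hFfix x
    rw [LinearMap.add_apply] at h1
    simp [hT₁def, he, hx] at h1
    simpa [hT₁def] using h1
  -- g₊
  set p2 : H →ₗ[K] A := conv F g.toLinearMap with hp2def
  have hp21 : p2 1 = 1 := by
    rw [hp2def, conv_one, hF1]; simp
  have hconv_e_right : ∀ f : H →ₗ[K] A, conv f e = f := fun f => by
    rw [he]; exact conv_unit_right f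
  have hconv_e_left : ∀ f : H →ₗ[K] A, conv e f = f := fun f => by
    rw [he]; exact conv_unit_left f
  have hFΦ : conv F Φ = p2 - F := by
    rw [hΦeq, conv_sub_right, hconv_e_right F, hp2def]
  have hp2rec : ∀ x, Coalgebra.counit (R := K) x = 0 →
      p2 x = conv F Φ x - P (conv F Φ x) := by
    intro x hx
    have h1 := hFrec x hx
    have h2 : P (conv F Φ x) = - F x := by rw [h1, neg_neg]
    rw [h2, hFΦ, LinearMap.sub_apply]
    ring
  -- convolution inverse of g₋
  set f₀ : H →ₗ[K] A := F - e with hf₀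
  have hf₀1 : f₀ 1 = 0 := by simp [hf₀, hF1, he1]
  have hFf₀ : F = f₀ + e := by rw [hf₀]; abel
  set T₂ : (H →ₗ[K] A) → (H →ₗ[K] A) := fun b => -(conv b f₀) with hT₂def
  have hT₂ : ∀ f h : H →ₗ[K] A, ∀ n : ℕ,
      (∀ m, m < n → ∀ y ∈ ℬ m, f y = h y) → ∀ x ∈ ℬ n, T₂ f x = T₂ h x := by
    intro f h n hfh x hx
    have := conv_eq_on_left ℬ hconn hred f₀ hf₀1 f h n hfh x hx
    simp [hT₂def, this]
  obtain ⟨b, hbfix, -⟩ := fixpoint_aux ℬ hinternal e T₂ hT₂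
  have hbF : conv b F = e := by
    have hb' : e + -(conv b f₀) = b := hbfix.symm
    rw [hFf₀, conv_add_right, hconv_e_right b]
    calc conv b f₀ + b = conv b f₀ + (e + -(conv b f₀)) := by rw [hb']
      _ = e := by abel
  set T₃ : (H →ₗ[K] A) → (H →ₗ[K] A) := fun c => -(conv f₀ c) with hT₃def
  have hT₃ : ∀ f h : H →ₗ[K] A, ∀ n : ℕ,
      (∀ m, m < n → ∀ y ∈ ℬ m, f y = h y) → ∀ x ∈ ℬ n, T₃ f x = T₃ h x := by
    intro f h n hfh x hx
    have := conv_eq_on_right ℬ hconn hred f₀ hf₀1 f h n hfh x hx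
    simp [hT₃def, this]
  obtain ⟨c, hcfix, -⟩ := fixpoint_aux ℬ hinternal e T₃ hT₃
  have hFc : conv F c = e := by
    have hc' : e + -(conv f₀ c) = c := hcfix.symm
    rw [hFf₀, conv_add_left, hconv_e_left c]
    calc conv f₀ c + c = conv f₀ c + (e + -(conv f₀ c)) := by rw [hc']
      _ = e := by abel
  have hbc : b = c := by
    calc b = conv b e := (hconv_e_right b).symm
      _ = conv b (conv F c) := by rw [hFc]
      _ = conv (conv b F) c := (conv_assoc _ _ _).symm
      _ = conv e c := by rw [hbF]
      _ = c := hconv_e_left c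
  have hFb : conv F b = e := by rw [hbc]; exact hFc
  have hmain : g.toLinearMap = conv b p2 := by
    calc g.toLinearMap = conv e g.toLinearMap := (hconv_e_left _).symm
      _ = conv (conv b F) g.toLinearMap := by rw [hbF]
      _ = conv b (conv F g.toLinearMap) := conv_assoc _ _ _
      _ = conv b p2 := by rw [hp2def]
  refine ⟨(F, p2), ⟨hF1, hp21, fun x hx => hFrec x hx, fun x hx => hp2rec x hx,
    ⟨b, by rw [hbF], by rw [hFb], hmain⟩⟩, ?_⟩
  -- uniqueness
  rintro ⟨q1, q2⟩ ⟨hq11, hq21, hq1rec, hq2rec, -⟩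
  have hq11' : q1 1 = 1 := hq11
  have hq21' : q2 1 = 1 := hq21
  have hcounit_one : Coalgebra.counit (R := K) (1 : H) = 1 := Bialgebra.counit_one
  have hq1F : q1 = F := by
    apply hFuniq
    refine ext_of_graded ℬ hsup _ _ fun m x hx => ?_
    rcases Nat.eq_zero_or_pos m with h0 | hpos
    · subst h0
      rw [hconn] at hx
      obtain ⟨cst, rfl⟩ := Submodule.mem_one.mp hx
      have h1 : (algebraMap K H) cst = cst • (1 : H) :=
        Algebra.algebraMap_eq_smul_one cst
      have hc1 : conv q1 Φ ((algebraMap K H) cst) = 0 := by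
        rw [h1, map_smul, conv_one, hΦ1, mul_zero, smul_zero]
      rw [LinearMap.add_apply]
      have hT1z : (T₁ q1) ((algebraMap K H) cst) = 0 := by
        have : (T₁ q1) ((algebraMap K H) cst)
            = -(P (conv q1 Φ ((algebraMap K H) cst))) := rfl
        rw [this, hc1, map_zero, neg_zero]
      have hez : e ((algebraMap K H) cst) = algebraMap K A cst := by
        have : e ((algebraMap K H) cst)
            = algebraMap K A (Coalgebra.counit (R := K) ((algebraMap K H) cst)) := rfl
        rw [this, h1, map_smul, hcounit_one, smul_eq_mul, mul_one]
      rw [hT1z, hez, add_zero, h1, map_smul, hq11']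
      exact (Algebra.algebraMap_eq_smul_one cst).symm
    · have hx0 : Coalgebra.counit (R := K) x = 0 :=
        hcounit m (by omega) x hx
      have this' : q1 x = -P (conv q1 Φ x) := hq1rec x hx0
      have hez : e x = 0 := by
        have : e x = algebraMap K A (Coalgebra.counit (R := K) x) := rfl
        rw [this, hx0, map_zero]
      rw [LinearMap.add_apply, hez, zero_add]
      exact this'
  have hq2p2 : q2 = p2 := by
    refine ext_of_graded ℬ hsup _ _ fun m x hx => ?_
    rcases Nat.eq_zero_or_pos m with h0 | hpos
    · subst h0
      rw [hconn] at hx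
      obtain ⟨cst, rfl⟩ := Submodule.mem_one.mp hx
      have h1 : (algebraMap K H) cst = cst • (1 : H) :=
        Algebra.algebraMap_eq_smul_one cst
      rw [h1, map_smul, map_smul, hq21', hp21]
    · have hx0 : Coalgebra.counit (R := K) x = 0 :=
        hcounit m (by omega) x hx
      have this' : q2 x = conv q1 Φ x - P (conv q1 Φ x) := hq2rec x hx0
      rw [hq1F] at this'
      rw [this', hp2rec x hx0]
  rw [Prod.mk.injEq]
  exact ⟨hq1F, hq2p2⟩
end

section
/- In the Birkhoff decomposition of a character g : H → A of a graded connected Hopf algebra with Rota-Baxter projection K, both components g₋ and g₊ are again characters (algebra homomorphisms) of H into A. -/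
open TensorProduct

/-- **The Birkhoff components are characters.** Let `H` be a graded connected Hopf algebra over a
field `K`, `A` a commutative algebra, `P` a Rota–Baxter operator of weight −1 on `A`, and
`g : H → A` a character. If `g₋, g₊ : H → A` satisfy the Birkhoff recursions
`g₋ = −P∘(g₋ ⋆ g∘(id−u∘ē))` and `g₊ = (id_A − P)∘(g₋ ⋆ g∘(id−u∘ē))` on the augmentation ideal
and take the value `1` on the unit, then both `g₋` and `g₊` are algebra homomorphisms. -/
theorem stmt_9 {K H A : Type*} [Field K] [Ring H] [HopfAlgebra K H]
    [CommRing A] [Algebra K A]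
    (ℬ : ℕ → Submodule K H)
    (hinternal : DirectSum.IsInternal ℬ)
    (hconn : ℬ 0 = (1 : Submodule K H))
    (hcounit : ∀ n, n ≠ 0 → ∀ x ∈ ℬ n, Coalgebra.counit (R := K) x = 0)
    (hred : ∀ n, 1 ≤ n → ∀ x ∈ ℬ n,
      Coalgebra.comul (R := K) x - x ⊗ₜ[K] (1 : H) - (1 : H) ⊗ₜ[K] x ∈
        ⨆ (p : ℕ) (q : ℕ) (_ : p + q = n ∧ p ≠ 0 ∧ q ≠ 0),
          LinearMap.range (TensorProduct.map (ℬ p).subtype (ℬ q).subtype))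
    (g : H →ₐ[K] A) (P : A →ₗ[K] A)
    (hP : ∀ a b, P a * P b = P (P a * b + a * P b - a * b))
    (gm gp : H →ₗ[K] A) (hgm1 : gm 1 = 1) (hgp1 : gp 1 = 1)
    (hgm : ∀ x, Coalgebra.counit (R := K) x = 0 →
      gm x = - P ((conv gm (g.toLinearMap ∘ₗ
        (LinearMap.id - (Algebra.linearMap K H) ∘ₗ Coalgebra.counit))) x))
    (hgp : ∀ x, Coalgebra.counit (R := K) x = 0 →
      gp x = (conv gm (g.toLinearMap ∘ₗ
          (LinearMap.id - (Algebra.linearMap K H) ∘ₗ Coalgebra.counit))) x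
        - P ((conv gm (g.toLinearMap ∘ₗ
          (LinearMap.id - (Algebra.linearMap K H) ∘ₗ Coalgebra.counit))) x)) :
    (∃ hm : H →ₐ[K] A, hm.toLinearMap = gm) ∧ (∃ hp : H →ₐ[K] A, hp.toLinearMap = gp) := by
  classical
  set gbar : H →ₗ[K] A := g.toLinearMap ∘ₗ
      (LinearMap.id - (Algebra.linearMap K H) ∘ₗ Coalgebra.counit) with hgbar_def
  set F : H ⊗[K] H →ₗ[K] A := LinearMap.mul' K A ∘ₗ TensorProduct.map gm gbar with hF_def
  -- basic facts
  have hF : ∀ z w : H, F (z ⊗ₜ[K] w) = gm z * gbar w := by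
    intro z w
    simp [hF_def, LinearMap.mul'_apply]
  have hconvF : ∀ z : H, conv gm gbar z = F (Coalgebra.comul (R := K) z) := fun _ => rfl
  have hgbar0 : ∀ z : H, Coalgebra.counit (R := K) z = 0 → gbar z = g z := by
    intro z hz
    simp [hgbar_def, hz]
  have hgbar1 : gbar (1 : H) = 0 := by
    simp [hgbar_def]
  -- the representation lemma for the reduced-coproduct supremum
  have hrepr : ∀ (n : ℕ) (T : H ⊗[K] H),
      T ∈ (⨆ (p : ℕ) (q : ℕ) (_ : p + q = n ∧ p ≠ 0 ∧ q ≠ 0),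
          LinearMap.range (TensorProduct.map (ℬ p).subtype (ℬ q).subtype)) →
      ∀ (C : H ⊗[K] H → Prop), C 0 → (∀ s t, C s → C t → C (s + t)) →
      (∀ a b, a + b = n → a ≠ 0 → b ≠ 0 → ∀ u ∈ ℬ a, ∀ v ∈ ℬ b, C (u ⊗ₜ[K] v)) → C T := by
    intro n T hT C h0 hadd hpure
    refine Submodule.iSup_induction _ (motive := C) hT (fun a T hT => ?_) h0 hadd
    refine Submodule.iSup_induction _ (motive := C) hT (fun b T hT => ?_) h0 hadd
    refine Submodule.iSup_induction _ (motive := C) hT (fun hab T hT => ?_) h0 hadd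
    obtain ⟨s, rfl⟩ := hT
    induction s using TensorProduct.induction_on with
    | zero => simpa using h0
    | tmul u v =>
        simpa using hpure a b hab.1 hab.2.1 hab.2.2 u.1 u.2 v.1 v.2
    | add s t hs ht => rw [map_add]; exact hadd _ _ hs ht
  -- the core multiplicativity for homogeneous elements, by strong induction on total degree
  have core : ∀ n p q, p + q = n → ∀ x ∈ ℬ p, ∀ y ∈ ℬ q, gm (x * y) = gm x * gm y := by
    intro n
    induction n using Nat.strong_induction_on with
    | _ n IH =>
    intro p q hpq x hx y hy
    rcases Nat.eq_zero_or_pos p with hp0 | hp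
    · subst hp0
      rw [hconn, Submodule.one_eq_span, Submodule.mem_span_singleton] at hx
      obtain ⟨c, rfl⟩ := hx
      rw [smul_mul_assoc, one_mul, map_smul, map_smul, hgm1, smul_mul_assoc, one_mul]
    rcases Nat.eq_zero_or_pos q with hq0 | hq
    · subst hq0
      rw [hconn, Submodule.one_eq_span, Submodule.mem_span_singleton] at hy
      obtain ⟨c, rfl⟩ := hy
      rw [mul_smul_comm, mul_one, map_smul, map_smul, hgm1, mul_smul_comm, mul_one]
    -- both degrees positive
    have hεx : Coalgebra.counit (R := K) x = 0 := hcounit p hp.ne' x hx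
    have hεy : Coalgebra.counit (R := K) y = 0 := hcounit q hq.ne' y hy
    set X : H ⊗[K] H :=
      Coalgebra.comul (R := K) x - x ⊗ₜ[K] (1 : H) - (1 : H) ⊗ₜ[K] x with hXdef
    set Y : H ⊗[K] H :=
      Coalgebra.comul (R := K) y - y ⊗ₜ[K] (1 : H) - (1 : H) ⊗ₜ[K] y with hYdef
    have hXmem := hred p hp x hx
    have hYmem := hred q hq y hy
    have hΔx : Coalgebra.comul (R := K) x = x ⊗ₜ[K] (1 : H) + (1 : H) ⊗ₜ[K] x + X := by
      rw [hXdef]; abel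
    have hΔy : Coalgebra.comul (R := K) y = y ⊗ₜ[K] (1 : H) + (1 : H) ⊗ₜ[K] y + Y := by
      rw [hYdef]; abel
    -- the five linearized lemmas
    have L1 : F ((x ⊗ₜ[K] (1 : H)) * Y) = gm x * F Y := by
      refine hrepr q Y hYmem (fun T => F ((x ⊗ₜ[K] (1 : H)) * T) = gm x * F T) (by simp)
        (fun s t hs ht => by rw [mul_add, map_add, hs, ht, map_add, mul_add]) ?_
      intro a b hab ha hb u hu v hv
      rw [Algebra.TensorProduct.tmul_mul_tmul, one_mul, hF, hF,
        IH (p + a) (by omega) p a rfl x hx u hu, mul_assoc]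
    have L2 : F (((1 : H) ⊗ₜ[K] x) * Y) = g x * F Y := by
      refine hrepr q Y hYmem (fun T => F (((1 : H) ⊗ₜ[K] x) * T) = g x * F T) (by simp)
        (fun s t hs ht => by rw [mul_add, map_add, hs, ht, map_add, mul_add]) ?_
      intro a b hab ha hb u hu v hv
      have hεv : Coalgebra.counit (R := K) v = 0 := hcounit b hb v hv
      have hεxv : Coalgebra.counit (R := K) (x * v) = 0 := by
        rw [Bialgebra.counit_mul, hεx, zero_mul]
      rw [Algebra.TensorProduct.tmul_mul_tmul, one_mul, hF, hF, hgbar0 _ hεxv,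
        hgbar0 _ hεv, map_mul]
      ring
    have L3 : F (X * (y ⊗ₜ[K] (1 : H))) = gm y * F X := by
      refine hrepr p X hXmem (fun T => F (T * (y ⊗ₜ[K] (1 : H))) = gm y * F T) (by simp)
        (fun s t hs ht => by rw [add_mul, map_add, hs, ht, map_add, mul_add]) ?_
      intro a b hab ha hb u hu v hv
      rw [Algebra.TensorProduct.tmul_mul_tmul, mul_one, hF, hF,
        IH (a + q) (by omega) a q rfl u hu y hy]
      ring
    have L4 : F (X * ((1 : H) ⊗ₜ[K] y)) = g y * F X := by
      refine hrepr p X hXmem (fun T => F (T * ((1 : H) ⊗ₜ[K] y)) = g y * F T) (by simp)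
        (fun s t hs ht => by rw [add_mul, map_add, hs, ht, map_add, mul_add]) ?_
      intro a b hab ha hb u hu v hv
      have hεv : Coalgebra.counit (R := K) v = 0 := hcounit b hb v hv
      have hεvy : Coalgebra.counit (R := K) (v * y) = 0 := by
        rw [Bialgebra.counit_mul, hεy, mul_zero]
      rw [Algebra.TensorProduct.tmul_mul_tmul, mul_one, hF, hF, hgbar0 _ hεvy,
        hgbar0 _ hεv, map_mul]
      ring
    have L5 : F (X * Y) = F X * F Y := by
      refine hrepr p X hXmem (fun T => F (T * Y) = F T * F Y) (by simp)
        (fun s t hs ht => by rw [add_mul, map_add, hs, ht, map_add, add_mul]) ?_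
      intro a b hab ha hb u hu v hv
      refine hrepr q Y hYmem (fun T => F ((u ⊗ₜ[K] v) * T) = F (u ⊗ₜ[K] v) * F T) (by simp)
        (fun s t hs ht => by rw [mul_add, map_add, hs, ht, map_add, mul_add]) ?_
      intro a' b' hab' ha' hb' s hs t ht
      have hεv : Coalgebra.counit (R := K) v = 0 := hcounit b hb v hv
      have hεt : Coalgebra.counit (R := K) t = 0 := hcounit b' hb' t ht
      have hεvt : Coalgebra.counit (R := K) (v * t) = 0 := by
        rw [Bialgebra.counit_mul, hεv, zero_mul]
      rw [Algebra.TensorProduct.tmul_mul_tmul, hF, hF, hF, hgbar0 _ hεvt, hgbar0 _ hεv,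
        hgbar0 _ hεt, map_mul g v t, IH (a + a') (by omega) a a' rfl u hu s hs]
      ring
    -- the values of F on the pure-tensor products
    have e11 : F ((x ⊗ₜ[K] (1 : H)) * (y ⊗ₜ[K] (1 : H))) = 0 := by
      rw [Algebra.TensorProduct.tmul_mul_tmul, mul_one, hF, hgbar1, mul_zero]
    have e12 : F ((x ⊗ₜ[K] (1 : H)) * ((1 : H) ⊗ₜ[K] y)) = gm x * g y := by
      rw [Algebra.TensorProduct.tmul_mul_tmul, mul_one, one_mul, hF, hgbar0 _ hεy]
    have e21 : F (((1 : H) ⊗ₜ[K] x) * (y ⊗ₜ[K] (1 : H))) = gm y * g x := by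
      rw [Algebra.TensorProduct.tmul_mul_tmul, one_mul, mul_one, hF, hgbar0 _ hεx]
    have hεxy : Coalgebra.counit (R := K) (x * y) = 0 := by
      rw [Bialgebra.counit_mul, hεx, zero_mul]
    have e22 : F (((1 : H) ⊗ₜ[K] x) * ((1 : H) ⊗ₜ[K] y)) = g x * g y := by
      rw [Algebra.TensorProduct.tmul_mul_tmul, one_mul, hF, hgm1, one_mul,
        hgbar0 _ hεxy, map_mul]
    -- F on the full coproducts
    have hFx : F (Coalgebra.comul (R := K) x) = g x + F X := by
      rw [hΔx, map_add, map_add, hF, hF, hgbar1, mul_zero, hgm1, one_mul,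
        hgbar0 _ hεx, zero_add]
    have hFy : F (Coalgebra.comul (R := K) y) = g y + F Y := by
      rw [hΔy, map_add, map_add, hF, hF, hgbar1, mul_zero, hgm1, one_mul,
        hgbar0 _ hεy, zero_add]
    -- the key identity
    have key : F (Coalgebra.comul (R := K) (x * y)) =
        gm x * F (Coalgebra.comul (R := K) y)
          + F (Coalgebra.comul (R := K) x) * gm y
          + F (Coalgebra.comul (R := K) x) * F (Coalgebra.comul (R := K) y) := by
      rw [Bialgebra.comul_mul, hFx, hFy, hΔx, hΔy]
      simp only [mul_add, add_mul, map_add]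
      rw [e11, e12, e21, e22, L1, L2, L3, L4, L5]
      ring
    -- conclude with the Rota–Baxter identity
    have hu : gm x = - P (F (Coalgebra.comul (R := K) x)) := by
      rw [hgm x hεx, hconvF]
    have hv : gm y = - P (F (Coalgebra.comul (R := K) y)) := by
      rw [hgm y hεy, hconvF]
    have harg : gm x * F (Coalgebra.comul (R := K) y)
          + F (Coalgebra.comul (R := K) x) * gm y
          + F (Coalgebra.comul (R := K) x) * F (Coalgebra.comul (R := K) y)
        = - (P (F (Coalgebra.comul (R := K) x)) * F (Coalgebra.comul (R := K) y)
            + F (Coalgebra.comul (R := K) x) * P (F (Coalgebra.comul (R := K) y))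
            - F (Coalgebra.comul (R := K) x) * F (Coalgebra.comul (R := K) y)) := by
      rw [hu, hv]; ring
    rw [hgm _ hεxy, hconvF, key, harg, map_neg, neg_neg, ← hP, hu, hv, neg_mul_neg]
  -- full multiplicativity of gm
  have hmul : ∀ x y : H, gm (x * y) = gm x * gm y := by
    have htop := hinternal.submodule_iSup_eq_top
    intro x y
    have hx : x ∈ ⨆ i, ℬ i := htop ▸ Submodule.mem_top
    have hy : y ∈ ⨆ i, ℬ i := htop ▸ Submodule.mem_top
    refine Submodule.iSup_induction ℬ (motive := fun z => gm (z * y) = gm z * gm y) hx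
      (fun p x hxB => ?_) (by simp) (fun s t hs ht => by
        rw [add_mul, map_add, map_add, add_mul, hs, ht])
    refine Submodule.iSup_induction ℬ (motive := fun w => gm (x * w) = gm x * gm w) hy
      (fun q y hyB => core (p + q) p q rfl x hxB y hyB) (by simp) (fun s t hs ht => by
        rw [mul_add, map_add, map_add, mul_add, hs, ht])
  -- the minus character
  set hmA : H →ₐ[K] A := AlgHom.ofLinearMap gm hgm1 hmul with hmA_def
  refine ⟨⟨hmA, rfl⟩, ?_⟩
  -- the plus character: gp = gm ⋆ g, a convolution of two characters
  set hpA : H →ₐ[K] A := (Algebra.TensorProduct.lmul' K).comp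
    ((Algebra.TensorProduct.map hmA g).comp (Bialgebra.comulAlgHom K H)) with hpA_def
  refine ⟨hpA, ?_⟩
  -- hpA as a linear map equals conv gm g
  have hmap : (Algebra.TensorProduct.map hmA g).toLinearMap
      = TensorProduct.map gm g.toLinearMap := by
    refine TensorProduct.ext' fun a b => ?_
    simp [hmA_def]
  have hpA_eq : ∀ z : H, hpA z = conv gm g.toLinearMap z := by
    intro z
    show (Algebra.TensorProduct.lmul' (S := A) K).toLinearMap
        ((Algebra.TensorProduct.map hmA g).toLinearMap (Coalgebra.comul (R := K) z))
      = (LinearMap.mul' K A)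
          ((TensorProduct.map gm g.toLinearMap) (Coalgebra.comul (R := K) z))
    rw [Algebra.TensorProduct.lmul'_toLinearMap, hmap]
  -- the convolution with the counit-unit part gives gm back
  have hcu : ∀ z : H,
      (LinearMap.mul' K A) ((TensorProduct.map gm
        ((Algebra.linearMap K A) ∘ₗ (Coalgebra.counit (R := K) (A := H))))
          (Coalgebra.comul (R := K) z)) = gm z := by
    intro z
    have hmaps : TensorProduct.map gm
          ((Algebra.linearMap K A) ∘ₗ (Coalgebra.counit (R := K) (A := H)))
        = (TensorProduct.map gm (Algebra.linearMap K A)) ∘ₗ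
            (LinearMap.lTensor H (Coalgebra.counit (R := K) (A := H))) := by
      refine TensorProduct.ext' fun a b => ?_
      simp
    rw [hmaps]
    show (LinearMap.mul' K A) ((TensorProduct.map gm (Algebra.linearMap K A))
        ((LinearMap.lTensor H (Coalgebra.counit (R := K)))
          (Coalgebra.comul (R := K) z))) = gm z
    rw [Coalgebra.lTensor_counit_comul]
    simp [LinearMap.mul'_apply]
  -- conv gm g splits as conv gm gbar + gm
  have hsplit : ∀ z : H, conv gm g.toLinearMap z = conv gm gbar z + gm z := by
    intro z
    have hg_decomp : g.toLinearMap = gbar +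
        (Algebra.linearMap K A) ∘ₗ (Coalgebra.counit (R := K) (A := H)) := by
      refine LinearMap.ext fun w => ?_
      simp [hgbar_def]
    show (LinearMap.mul' K A) ((TensorProduct.map gm g.toLinearMap)
        (Coalgebra.comul (R := K) z)) = _
    rw [hg_decomp, TensorProduct.map_add_right, LinearMap.add_apply, map_add, hcu]
    rfl
  -- now check: hpA = gp as linear maps, using the splitting z = z₀ + ε z • 1
  refine LinearMap.ext fun z => ?_
  have hz0 : Coalgebra.counit (R := K)
      (z - (algebraMap K H) (Coalgebra.counit (R := K) z)) = 0 := by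
    rw [map_sub, Bialgebra.counit_algebraMap, sub_self]
  set z₀ : H := z - (algebraMap K H) (Coalgebra.counit (R := K) z) with hz₀def
  have hzsum : z = z₀ + (Coalgebra.counit (R := K) z) • (1 : H) := by
    rw [hz₀def, Algebra.algebraMap_eq_smul_one]; abel
  have hgpz0 : gp z₀ = conv gm g.toLinearMap z₀ := by
    rw [hgp z₀ hz0, hsplit z₀, hgm z₀ hz0]
    ring
  have hgp1' : gp ((Coalgebra.counit (R := K) z) • (1 : H))
      = conv gm g.toLinearMap ((Coalgebra.counit (R := K) z) • (1 : H)) := by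
    rw [map_smul, map_smul, hgp1]
    congr 1
    have : conv gm g.toLinearMap (1 : H) = (LinearMap.mul' K A)
        ((TensorProduct.map gm g.toLinearMap) (Coalgebra.comul (R := K) (1 : H))) := rfl
    rw [this, Bialgebra.comul_one, Algebra.TensorProduct.one_def]
    simp [LinearMap.mul'_apply, hgm1]
  show hpA z = gp z
  rw [hpA_eq z, hzsum, map_add, map_add, hgpz0, hgp1']
end

section
/- Let H be a graded connected Hopf algebra, A a commutative algebra, and K : A → A a Rota-Baxter operator of weight −1. Define the 'twisted antipode' S_K : H → A recursively by S_K(1) = 1 and S_K(x) = −φ(x) − Σ K(S_K(x′))·φ(x″) for x in the augmentation ideal (with Δ(x) = x⊗1 + 1⊗x + Σ x′⊗x″), where φ : H → A is a character. Then K∘S_K equals the Birkhoff negative part φ₋ of the character φ, i.e., K∘S_K(x) = φ₋(x) = −K(φ(x) + Σ φ₋(x′)φ(x″)) for all x in the augmentation ideal. -/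
open TensorProduct

/-- **The twisted antipode gives the Birkhoff negative part.** Let `H` be a graded connected Hopf
algebra over a field `K`, `A` a commutative algebra, `P : A → A` a Rota–Baxter operator of weight
−1, and `φ : H → A` a character. Define the twisted antipode `S_P : H → A` by `S_P(1) = 1` and
`S_P(x) = −φ(x) − Σ P(S_P(x′))·φ(x″)` on the augmentation ideal (sum over the reduced coproduct
`Δ̃(x) = Δ(x) − x⊗1 − 1⊗x = Σ x′⊗x″`), and let `φ₋` satisfy the Birkhoff recursion
`φ₋(x) = −P(φ(x) + Σ φ₋(x′)φ(x″))` with `φ₋(1) = 1`. Then `P∘S_P = φ₋` on the augmentation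
ideal. -/
theorem stmt_19 {K H A : Type*} [Field K] [Ring H] [HopfAlgebra K H]
    [CommRing A] [Algebra K A]
    (ℬ : ℕ → Submodule K H)
    (hinternal : DirectSum.IsInternal ℬ)
    (hconn : ℬ 0 = (1 : Submodule K H))
    (hcounit : ∀ n, n ≠ 0 → ∀ x ∈ ℬ n, Coalgebra.counit (R := K) x = 0)
    (hred : ∀ n, 1 ≤ n → ∀ x ∈ ℬ n,
      Coalgebra.comul (R := K) x - x ⊗ₜ[K] (1 : H) - (1 : H) ⊗ₜ[K] x ∈
        ⨆ (p : ℕ) (q : ℕ) (_ : p + q = n ∧ p ≠ 0 ∧ q ≠ 0),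
          LinearMap.range (TensorProduct.map (ℬ p).subtype (ℬ q).subtype))
    (φ : H →ₐ[K] A) (P : A →ₗ[K] A)
    (hP : ∀ a b, P a * P b = P (P a * b + a * P b - a * b))
    (SP : H →ₗ[K] A) (hSP1 : SP 1 = 1)
    (hSP : ∀ x, Coalgebra.counit (R := K) x = 0 →
      SP x = - φ x - (LinearMap.mul' K A)
        ((TensorProduct.map (P ∘ₗ SP) φ.toLinearMap)
          (Coalgebra.comul (R := K) x - x ⊗ₜ[K] (1 : H) - (1 : H) ⊗ₜ[K] x)))
    (φm : H →ₗ[K] A) (hφm1 : φm 1 = 1)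
    (hφm : ∀ x, Coalgebra.counit (R := K) x = 0 →
      φm x = - P (φ x + (LinearMap.mul' K A)
        ((TensorProduct.map φm φ.toLinearMap)
          (Coalgebra.comul (R := K) x - x ⊗ₜ[K] (1 : H) - (1 : H) ⊗ₜ[K] x)))) :
    ∀ x, Coalgebra.counit (R := K) x = 0 → P (SP x) = φm x := by
  classical
  set Δ : H →ₗ[K] H ⊗[K] H := Coalgebra.comul with hΔdef
  set D : H →ₗ[K] A := P ∘ₗ SP - φm with hD
  -- main induction: graded pieces of positive degree lie in ker D
  have main : ∀ n, 1 ≤ n → ℬ n ≤ LinearMap.ker D := by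
    intro n
    induction n using Nat.strong_induction_on with
    | _ n ih =>
      intro hn x hx
      have hc : Coalgebra.counit (R := K) x = 0 := hcounit n (by omega) x hx
      have hΔ := hred n hn x hx
      -- the reduced coproduct is killed by map D φ
      have hker : (⨆ (p : ℕ) (q : ℕ) (_ : p + q = n ∧ p ≠ 0 ∧ q ≠ 0),
          LinearMap.range (TensorProduct.map (ℬ p).subtype (ℬ q).subtype)) ≤
          LinearMap.ker (TensorProduct.map D φ.toLinearMap) := by
        refine iSup_le fun p => iSup_le fun q => iSup_le fun hpq => ?_
        obtain ⟨hpq, hp, hq⟩ := hpq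
        rw [LinearMap.range_le_ker_iff]
        apply TensorProduct.ext'
        intro a b
        have hDa : D (a : H) = 0 := ih p (by omega) (by omega) a.2
        simp [TensorProduct.map_tmul, hDa]
      have h0 : TensorProduct.map D φ.toLinearMap
          (Δ x - x ⊗ₜ[K] (1 : H) - (1 : H) ⊗ₜ[K] x) = 0 :=
        LinearMap.mem_ker.mp (hker hΔ)
      have hsplit : TensorProduct.map D φ.toLinearMap =
          TensorProduct.map (P ∘ₗ SP) φ.toLinearMap - TensorProduct.map φm φ.toLinearMap := by
        apply TensorProduct.ext'
        intro a b
        simp [hD, TensorProduct.sub_tmul]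
      rw [hsplit, LinearMap.sub_apply, sub_eq_zero] at h0
      have hM : (LinearMap.mul' K A) ((TensorProduct.map (P ∘ₗ SP) φ.toLinearMap)
            (Δ x - x ⊗ₜ[K] (1 : H) - (1 : H) ⊗ₜ[K] x)) =
          (LinearMap.mul' K A) ((TensorProduct.map φm φ.toLinearMap)
            (Δ x - x ⊗ₜ[K] (1 : H) - (1 : H) ⊗ₜ[K] x)) := congrArg _ h0
      have : D x = 0 := by
        simp only [hD, LinearMap.sub_apply, LinearMap.comp_apply]
        rw [hSP x hc, hφm x hc, hM]
        rw [map_sub, map_neg, map_add]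
        ring
      exact LinearMap.mem_ker.mpr this
  -- positive-degree part
  set S : Submodule K H := ⨆ (n : ℕ) (_ : 1 ≤ n), ℬ n with hS
  have hScounit : S ≤ LinearMap.ker (Coalgebra.counit (R := K) (A := H)) :=
    iSup_le fun n => iSup_le fun hn => fun w hw =>
      LinearMap.mem_ker.mpr (hcounit n (by omega) w hw)
  have hSD : S ≤ LinearMap.ker D := iSup_le fun n => iSup_le fun hn => main n hn
  intro x hcx
  have hxtop : x ∈ ℬ 0 ⊔ S := by
    have : (⊤ : Submodule K H) ≤ ℬ 0 ⊔ S := by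
      rw [← hinternal.submodule_iSup_eq_top]
      refine iSup_le fun n => ?_
      rcases Nat.eq_zero_or_pos n with h | h
      · subst h; exact le_sup_left
      · exact le_trans (le_iSup₂ (f := fun n (_ : 1 ≤ n) => ℬ n) n h) le_sup_right
    exact this trivial
  obtain ⟨y, hy, z, hz, rfl⟩ := Submodule.mem_sup.mp hxtop
  rw [hconn, Submodule.mem_one] at hy
  obtain ⟨c, rfl⟩ := hy
  have hcz : Coalgebra.counit (R := K) z = 0 := hScounit hz
  have hc0 : c = 0 := by
    have := hcx
    rw [map_add, hcz, add_zero, Bialgebra.counit_algebraMap] at this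
    exact this
  subst hc0
  have hDz : D z = 0 := hSD hz
  have : P (SP z) - φm z = 0 := by simpa [hD] using hDz
  rw [map_zero, zero_add]
  exact sub_eq_zero.mp this
end
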